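/- Let m ≥ k ≥ 1, and let R be the quotient of the polynomial ring Q[c_1,...,c_k, c'_1,...,c'_m] by the ideal generated by the elements Σ_{i+j=l} c'_i c_j for 1 ≤ l ≤ m+k (with the convention c_0 = c'_0 = 1, c_j = 0 for j > k, c'_i = 0 for i > m). Then the image of c_1^m in R is nonzero. -/

import Mathlib

open MvPolynomial

/-- The Chern class generators `c_1, ..., c_k` (with `c_0 = 1` and `c_j = 0`
for `j > k`) inside `ℚ[c_1,...,c_k, c'_1,...,c'_m]`. -/
noncomputable def cgen (k m j : ℕ) : MvPolynomial (Fin k ⊕ Fin m) ℚ :=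
  if h0 : j = 0 then 1
  else if h : j ≤ k then X (Sum.inl ⟨j - 1, by omega⟩) else 0

/-- The complementary Chern class generators `c'_1, ..., c'_m`. -/
noncomputable def cgen' (k m i : ℕ) : MvPolynomial (Fin k ⊕ Fin m) ℚ :=
  if h0 : i = 0 then 1
  else if h : i ≤ m then X (Sum.inr ⟨i - 1, by omega⟩) else 0

/-- The relation `Σ_{i+j=l} c'_i c_j`. -/
noncomputable def grassRel (k m l : ℕ) : MvPolynomial (Fin k ⊕ Fin m) ℚ :=
  ∑ p ∈ Finset.HasAntidiagonal.antidiagonal l, cgen' k m p.1 * cgen k m p.2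

noncomputable abbrev TR (m : ℕ) : Type :=
  Polynomial ℚ ⧸ Ideal.span {(Polynomial.X : Polynomial ℚ) ^ (m + 1)}

noncomputable def tx (m : ℕ) : TR m := Ideal.Quotient.mk _ Polynomial.X

lemma tx_pow_top (m : ℕ) : tx m ^ (m + 1) = 0 := by
  rw [tx, ← map_pow, Ideal.Quotient.eq_zero_iff_mem]
  exact Ideal.subset_span rfl

lemma tx_pow_m_ne_zero (m : ℕ) : tx m ^ m ≠ 0 := by
  rw [tx, ← map_pow, Ne, Ideal.Quotient.eq_zero_iff_mem, Ideal.mem_span_singleton]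
  intro h
  have := (pow_dvd_pow_iff Polynomial.X_ne_zero Polynomial.not_isUnit_X).mp h
  omega

noncomputable def fmap (k m : ℕ) : Fin k ⊕ Fin m → TR m :=
  Sum.elim (fun j => if j.val = 0 then tx m else 0) (fun i => (- tx m) ^ (i.val + 1))

lemma aeval_cgen (k m : ℕ) (j : ℕ) :
    aeval (fmap k m) (cgen k m j) =
      if j = 0 then 1 else if j = 1 ∧ 1 ≤ k then tx m else 0 := by
  unfold cgen
  by_cases h0 : j = 0
  · simp [h0]
  · rw [dif_neg h0, if_neg h0]
    by_cases hk' : j ≤ k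
    · rw [dif_pos hk', aeval_X]
      simp only [fmap, Sum.elim_inl]
      by_cases hj : j = 1
      · rw [if_pos (show j - 1 = 0 by omega), if_pos ⟨hj, by omega⟩]
      · rw [if_neg (show ¬(j - 1 = 0) by omega), if_neg (by omega)]
    · rw [dif_neg hk', map_zero, if_neg (by omega)]

lemma aeval_cgen' (k m : ℕ) (i : ℕ) :
    aeval (fmap k m) (cgen' k m i) = if i ≤ m then (- tx m) ^ i else 0 := by
  unfold cgen'
  by_cases h0 : i = 0
  · simp [h0]
  · rw [dif_neg h0]
    by_cases hm : i ≤ m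
    · rw [dif_pos hm, aeval_X, if_pos hm]
      simp only [fmap, Sum.elim_inr]
      congr 1
      omega
    · rw [dif_neg hm, map_zero, if_neg hm]

lemma aeval_grassRel (k m : ℕ) (hk : 1 ≤ k) (l : ℕ) (hl : 1 ≤ l) :
    aeval (fmap k m) (grassRel k m l) = 0 := by
  unfold grassRel
  rw [map_sum, Finset.Nat.sum_antidiagonal_eq_sum_range_succ_mk]
  have step : ∀ i ∈ Finset.range (l + 1),
      aeval (fmap k m) (cgen' k m i * cgen k m (l - i)) =
        (if i = l then (if l ≤ m then (- tx m) ^ l else 0) else 0)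
        + (if i = l - 1 then (if l - 1 ≤ m then (- tx m) ^ (l - 1) * tx m else 0) else 0) := by
    intro i hi
    rw [Finset.mem_range] at hi
    rw [map_mul, aeval_cgen, aeval_cgen']
    by_cases h1 : i = l
    · subst h1
      simp [Nat.sub_self, show ¬ i = i - 1 by omega]
    · by_cases h2 : i = l - 1
      · subst h2
        rw [if_neg (show ¬(l - (l - 1) = 0) by omega),
          if_pos (show l - (l - 1) = 1 ∧ 1 ≤ k from ⟨by omega, hk⟩), if_neg h1, if_pos rfl]
        split_ifs <;> ring
      · rw [if_neg (show ¬(l - i = 0) by omega),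
          if_neg (show ¬(l - i = 1 ∧ 1 ≤ k) by omega), if_neg h1, if_neg h2]
        simp
  rw [Finset.sum_congr rfl step, Finset.sum_add_distrib,
    Finset.sum_ite_eq' (Finset.range (l + 1)) l,
    Finset.sum_ite_eq' (Finset.range (l + 1)) (l - 1),
    if_pos (Finset.mem_range.mpr (by omega)), if_pos (Finset.mem_range.mpr (by omega))]
  by_cases hlm : l ≤ m
  · rw [if_pos hlm, if_pos (by omega)]
    obtain ⟨n, rfl⟩ : ∃ n, l = n + 1 := ⟨l - 1, by omega⟩
    simp only [Nat.add_sub_cancel, pow_succ]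
    ring
  · rw [if_neg hlm]
    by_cases hlm1 : l - 1 ≤ m
    · rw [if_pos hlm1]
      have h2 : (- tx m) ^ (l - 1) * tx m = (-1 : TR m) ^ m * tx m ^ (m + 1) := by
        rw [show l - 1 = m from by omega]; ring
      rw [h2, tx_pow_top]
      ring
    · rw [if_neg hlm1]; ring

theorem c1_pow_m_ne_zero_in_grassmannian (k m : ℕ) (hk : 1 ≤ k) (hmk : k ≤ m) :
    Ideal.Quotient.mk
        (Ideal.span ((Finset.Icc 1 (m + k)).image (grassRel k m) : Set (MvPolynomial (Fin k ⊕ Fin m) ℚ)))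
        (cgen k m 1 ^ m) ≠ 0 := by
  intro h
  rw [Ideal.Quotient.eq_zero_iff_mem] at h
  have hker : Ideal.span ((Finset.Icc 1 (m + k)).image (grassRel k m) :
      Set (MvPolynomial (Fin k ⊕ Fin m) ℚ)) ≤ RingHom.ker ((aeval (fmap k m)).toRingHom) := by
    rw [Ideal.span_le]
    intro p hp
    simp only [Finset.coe_image, Set.mem_image, Finset.mem_coe, Finset.mem_Icc] at hp
    obtain ⟨l, ⟨hl1, hl2⟩, rfl⟩ := hp
    exact aeval_grassRel k m hk l hl1
  have h0 : aeval (fmap k m) (cgen k m 1 ^ m) = 0 := hker h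
  rw [map_pow, aeval_cgen, if_neg (by omega), if_pos ⟨rfl, hk⟩] at h0
  exact tx_pow_m_ne_zero m h0
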